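/- Let G be a finite connected split graph with split partition (K, I), where K is a maximal clique with |K| ≥ 3 and I is a nonempty independent set, and let T be a spanning tree of G with s(T) = τ₂(G) (an s-optimal tree). Then every vertex of I is a leaf of T. -/

import Mathlib

open SimpleGraph Finset

variable {V : Type*}

/-- The `m`-metric (first Zagreb index) of a graph: the sum of the squares of the degrees. -/
noncomputable def mMetric [Fintype V] (G : SimpleGraph V) : ℕ :=
  letI := Classical.decRel G.Adj
  ∑ v : V, (G.degree v) ^ 2

/-- The `s`-metric (second Zagreb index) of a graph: the sum over all edges of the product of
the degrees of the two endpoints. -/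
noncomputable def sMetric [Fintype V] (G : SimpleGraph V) : ℕ :=
  letI := Classical.decRel G.Adj
  ∑ e ∈ G.edgeFinset,
    Sym2.lift ⟨fun u v => G.degree u * G.degree v, fun _ _ => Nat.mul_comm _ _⟩ e

/-- The first SF-dimension: the maximum of the `m`-metric over all spanning trees. -/
noncomputable def tau1 [Fintype V] (G : SimpleGraph V) : ℕ :=
  sSup {k | ∃ T : SimpleGraph V, T ≤ G ∧ T.IsTree ∧ mMetric T = k}

/-- The second SF-dimension: the maximum of the `s`-metric over all spanning trees. -/
noncomputable def tau2 [Fintype V] (G : SimpleGraph V) : ℕ :=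
  sSup {k | ∃ T : SimpleGraph V, T ≤ G ∧ T.IsTree ∧ sMetric T = k}

/-- Number of vertices of a given degree. -/
noncomputable def degCount [Fintype V] (G : SimpleGraph V) (k : ℕ) : ℕ :=
  letI := Classical.decRel G.Adj
  letI := Classical.decEq V
  (Finset.univ.filter fun v => G.degree v = k).card

/-- Number of leaves of a graph. -/
noncomputable def leafCount [Fintype V] (G : SimpleGraph V) : ℕ := degCount G 1

section helpers

lemma reachable_transfer {A B : SimpleGraph V} (h : ∀ u v, A.Adj u v → B.Reachable u v)
    {u v : V} (r : A.Reachable u v) : B.Reachable u v := by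
  obtain ⟨w⟩ := r
  induction w with
  | nil => exact Reachable.refl _
  | cons h' p ih => exact (h _ _ h').trans ih

lemma connected_transfer {A B : SimpleGraph V} (hA : A.Connected)
    (h : ∀ u v, A.Adj u v → B.Reachable u v) : B.Connected := by
  haveI := hA.nonempty
  exact ⟨fun u v => reachable_transfer h (hA.preconnected u v)⟩

lemma connected_delete_nonbridge {A : SimpleGraph V} (hA : A.Connected) {u v : V}
    (huv : A.Adj u v) (hb : ¬ A.IsBridge s(u,v)) :
    (A \ fromEdgeSet {s(u,v)}).Connected := by
  rw [isBridge_iff] at hb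
  push_neg at hb
  have hr : (A \ fromEdgeSet {s(u,v)}).Reachable u v := hb
  refine connected_transfer hA ?_
  intro p q hpq
  by_cases he : s(p,q) = s(u,v)
  · rw [Sym2.eq_iff] at he
    rcases he with ⟨rfl, rfl⟩ | ⟨rfl, rfl⟩
    · exact hr
    · exact hr.symm
  · refine Adj.reachable ?_
    rw [sdiff_adj, fromEdgeSet_adj]
    exact ⟨hpq, by simp [he]⟩

lemma edgeFinset_delete_eq [Fintype V] [DecidableEq V] {A : SimpleGraph V} [Fintype A.edgeSet]
    {u v : V} (h : A.Adj u v)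
    [Fintype ((A \ fromEdgeSet {s(u,v)}).edgeSet)] :
    (A \ fromEdgeSet {s(u,v)}).edgeFinset = A.edgeFinset.erase s(u,v) := by
  ext e
  simp only [mem_edgeFinset, Finset.mem_erase, edgeSet_sdiff, edgeSet_fromEdgeSet,
    Set.mem_diff, Set.mem_setOf_eq, Set.mem_singleton_iff]
  constructor
  · rintro ⟨he, hne⟩
    exact ⟨fun hh => hne ⟨hh, by simp [hh ▸ (Sym2.mk_isDiag_iff.not.mpr h.ne)]⟩, he⟩
  · rintro ⟨hne, he⟩
    exact ⟨he, fun hh => hne hh.1⟩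

lemma card_le_edges_of_connected [Fintype V] :
    ∀ (n : ℕ) (A : SimpleGraph V) [Fintype A.edgeSet],
      A.edgeFinset.card = n → A.Connected → Fintype.card V ≤ n + 1 := by
  classical
  intro n
  induction n using Nat.strong_induction_on with
  | _ n ih =>
    intro A _ hcard hconn
    by_cases hac : A.IsAcyclic
    · have ht : A.IsTree := ⟨hconn, hac⟩
      have := ht.card_edgeFinset
      omega
    · rw [isAcyclic_iff_forall_adj_isBridge] at hac
      push_neg at hac
      obtain ⟨u, v, huv, hb⟩ := hac
      set A' := A \ fromEdgeSet {s(u,v)} with hA'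
      haveI : Fintype A'.edgeSet := Fintype.ofFinite _
      have hconn' : A'.Connected := connected_delete_nonbridge hconn huv hb
      have hE : A'.edgeFinset = A.edgeFinset.erase s(u,v) := edgeFinset_delete_eq huv
      have hmem : s(u,v) ∈ A.edgeFinset := by simpa [mem_edgeFinset] using huv
      have hlt : A'.edgeFinset.card < n := by
        rw [hE, Finset.card_erase_of_mem hmem, hcard]
        have : 0 < n := hcard ▸ Finset.card_pos.mpr ⟨_, hmem⟩
        omega
      have := ih _ hlt A' rfl hconn'
      omega

lemma isTree_of_connected_card [Fintype V] (A : SimpleGraph V) [Fintype A.edgeSet]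
    (hconn : A.Connected) (hcard : A.edgeFinset.card + 1 = Fintype.card V) : A.IsTree := by
  classical
  refine ⟨hconn, ?_⟩
  by_contra hac
  rw [isAcyclic_iff_forall_adj_isBridge] at hac
  push_neg at hac
  obtain ⟨u, v, huv, hb⟩ := hac
  set A' := A \ fromEdgeSet {s(u,v)} with hA'
  haveI : Fintype A'.edgeSet := Fintype.ofFinite _
  have hconn' : A'.Connected := connected_delete_nonbridge hconn huv hb
  have hE : A'.edgeFinset = A.edgeFinset.erase s(u,v) := edgeFinset_delete_eq huv
  have hmem : s(u,v) ∈ A.edgeFinset := by simpa [mem_edgeFinset] using huv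
  have := card_le_edges_of_connected A'.edgeFinset.card A' rfl hconn'
  rw [hE, Finset.card_erase_of_mem hmem] at this
  have hpos : 0 < A.edgeFinset.card := Finset.card_pos.mpr ⟨_, hmem⟩
  omega

lemma sMetric_eq' [Fintype V] (G : SimpleGraph V) [DecidableRel G.Adj] [Fintype G.edgeSet] :
    sMetric G = ∑ e ∈ G.edgeFinset,
      Sym2.lift ⟨fun u v => G.degree u * G.degree v, fun _ _ => Nat.mul_comm _ _⟩ e := by
  unfold sMetric
  congr!

lemma le_tau2' [Fintype V] (G : SimpleGraph V) {T' : SimpleGraph V} (h1 : T' ≤ G)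
    (h2 : T'.IsTree) : sMetric T' ≤ tau2 G := by
  haveI : Finite (SimpleGraph V) :=
    Finite.of_injective (fun G => G.Adj) (fun _ _ h => SimpleGraph.ext h)
  apply le_csSup
  · refine Set.Finite.bddAbove (Set.Finite.subset (Set.finite_range (sMetric (V := V))) ?_)
    rintro k ⟨T, _, _, rfl⟩
    exact ⟨T, rfl⟩
  · exact ⟨T', h1, h2, rfl⟩

lemma tree_no_triangle {A : SimpleGraph V} (hA : A.IsAcyclic) {x a b : V}
    (hxa : A.Adj x a) (hxb : A.Adj x b) (hab : a ≠ b) : ¬ A.Adj a b := by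
  intro h
  have hp1 : (Walk.cons h Walk.nil : A.Walk a b).IsPath := by
    simp [Walk.isPath_def, h.ne]
  have hp2 : (Walk.cons hxa.symm (Walk.cons hxb Walk.nil) : A.Walk a b).IsPath := by
    simp [Walk.isPath_def, hxa.ne', hab, hxb.ne]
  have := hA.path_unique ⟨_, hp1⟩ ⟨_, hp2⟩
  have hlen := congrArg (fun p => (Subtype.val p).length) this
  simp [Walk.length_cons] at hlen

/-- The rewired graph: all edges from `x` to vertices other than `a` are replaced by
edges from `a` to those vertices. -/
def rewire (T : SimpleGraph V) (x a : V) (hax : x ≠ a) : SimpleGraph V where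
  Adj u v := (T.Adj u v ∧ u ≠ x ∧ v ≠ x) ∨ (u = x ∧ v = a) ∨ (u = a ∧ v = x) ∨
      (u = a ∧ T.Adj x v ∧ v ≠ a) ∨ (v = a ∧ T.Adj x u ∧ u ≠ a)
  symm := by
    refine ⟨fun u v h => ?_⟩
    rcases h with ⟨h, h1, h2⟩ | ⟨rfl, rfl⟩ | ⟨rfl, rfl⟩ | ⟨rfl, h⟩ | ⟨rfl, h⟩
    · exact Or.inl ⟨h.symm, h2, h1⟩
    · exact Or.inr (Or.inr (Or.inl ⟨rfl, rfl⟩))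
    · exact Or.inr (Or.inl ⟨rfl, rfl⟩)
    · exact Or.inr (Or.inr (Or.inr (Or.inr ⟨rfl, h⟩)))
    · exact Or.inr (Or.inr (Or.inr (Or.inl ⟨rfl, h⟩)))
  loopless := by
    refine ⟨fun u h => ?_⟩
    rcases h with ⟨h, _, _⟩ | ⟨rfl, h⟩ | ⟨rfl, h⟩ | ⟨rfl, h, hne⟩ | ⟨rfl, h, hne⟩
    · exact T.loopless.irrefl u h
    · exact hax h
    · exact hax h.symm
    · exact hne rfl
    · exact hne rfl

end helpers

set_option maxHeartbeats 2000000 in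
/-- Claim 1: in an s-optimal spanning tree of a connected split graph with split partition
`(K, I)`, where `K` is a maximal clique with `|K| ≥ 3` and `I` is a nonempty independent
set, every vertex of `I` is a leaf. -/
theorem indep_vertices_are_leaves_of_sOptimal [Fintype V]
    (G : SimpleGraph V) (hG : G.Connected)
    (K I : Set V) (hpart : ∀ x : V, x ∈ K ∨ x ∈ I) (hdisj : Disjoint K I)
    (hK : G.IsClique K)
    (hKmax : ∀ K' : Set V, G.IsClique K' → K ⊆ K' → K' ⊆ K)
    (hI : ∀ a ∈ I, ∀ b ∈ I, ¬G.Adj a b)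
    (hKcard : 3 ≤ K.ncard) (hIne : I.Nonempty)
    (T : SimpleGraph V) [DecidableRel T.Adj] (hle : T ≤ G) (hT : T.IsTree)
    (hopt : sMetric T = tau2 G) :
    ∀ x ∈ I, T.degree x = 1 := by
  classical
  by_contra hcon
  push_neg at hcon
  obtain ⟨x, hxI, hxdeg⟩ := hcon
  haveI : Nonempty V := hG.nonempty
  have hxK : x ∉ K := fun h => Set.disjoint_left.mp hdisj h hxI
  have hKne : K.Nonempty := by
    rcases Set.eq_empty_or_nonempty K with h | h
    · rw [h] at hKcard; simp [Set.ncard_empty] at hKcard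
    · exact h
  obtain ⟨y, hyK⟩ := hKne
  have hyx : y ≠ x := fun h => hxK (h ▸ hyK)
  have hdx1 : 0 < T.degree x := by
    rw [degree_pos_iff_exists_adj]
    obtain ⟨w⟩ := hT.isConnected.preconnected x y
    cases w with
    | nil => exact absurd rfl hyx.symm
    | cons h p => exact ⟨_, h⟩
  have hm : 2 ≤ T.degree x := by omega
  have hNK : ∀ b, T.Adj x b → b ∈ K := fun b hb =>
    (hpart b).resolve_right (fun hbI => hI x hxI b hbI (hle hb))
  -- there is a neighbor of x of degree at least 2
  have hex : ∃ a, T.Adj x a ∧ 2 ≤ T.degree a := by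
    by_contra hno
    push_neg at hno
    have hdeg1 : ∀ b, T.Adj x b → T.degree b = 1 := by
      intro b hb
      have h1 : 0 < T.degree b := (T.degree_pos_iff_exists_adj b).mpr ⟨x, hb.symm⟩
      have h2 := hno b hb
      omega
    have hall : ∀ v, v = x ∨ T.Adj x v := by
      intro v
      by_cases hvx : v = x
      · exact Or.inl hvx
      · obtain ⟨w⟩ := hT.isConnected.preconnected x v
        obtain ⟨p, hp⟩ := w.toPath
        cases p with
        | nil => exact absurd rfl hvx
        | cons hadj q =>
          rename_i b
          cases q with
          | nil => exact Or.inr hadj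
          | cons hadj2 r =>
            rename_i c
            exfalso
            have hd := hdeg1 _ hadj
            have hnd := hp.support_nodup
            rw [Walk.support_cons, List.nodup_cons] at hnd
            have hxc : x ∉ (Walk.cons hadj2 r).support := hnd.1
            have hcmem : c ∈ (Walk.cons hadj2 r).support := by
              rw [Walk.support_cons]
              exact List.mem_cons_of_mem _ r.start_mem_support
            have hxc' : x ≠ c := fun h => hxc (h ▸ hcmem)
            obtain ⟨z, hz⟩ := Finset.card_eq_one.mp hd
            have hx_in : x ∈ T.neighborFinset b := by
              rw [mem_neighborFinset]; exact hadj.symm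
            have hc_in : c ∈ T.neighborFinset b := by
              rw [mem_neighborFinset]; exact hadj2
            rw [hz, Finset.mem_singleton] at hx_in hc_in
            exact hxc' (hx_in.trans hc_in.symm)
    have hclq : G.IsClique (insert x K) := by
      rw [SimpleGraph.isClique_iff]
      intro u hu v hv huv
      rcases Set.mem_insert_iff.mp hu with rfl | huK
      · rcases Set.mem_insert_iff.mp hv with rfl | hvK
        · exact absurd rfl huv
        · rcases hall v with rfl | hadj
          · exact absurd rfl huv
          · exact hle hadj
      · rcases Set.mem_insert_iff.mp hv with rfl | hvK
        · rcases hall u with rfl | hadj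
          · exact absurd rfl huv
          · exact (hle hadj).symm
        · exact hK huK hvK huv
    exact hxK (hKmax _ hclq (Set.subset_insert _ _) (Set.mem_insert _ _))
  obtain ⟨a, ha, hda⟩ := hex
  have hax : x ≠ a := ha.ne
  have haK : a ∈ K := hNK a ha
  -- the set S of moved neighbors
  set S : Finset V := (T.neighborFinset x).erase a with hSdef
  have hSmem : ∀ b, b ∈ S ↔ (T.Adj x b ∧ b ≠ a) := by
    intro b
    rw [hSdef, Finset.mem_erase, mem_neighborFinset, and_comm]
  have haS : a ∉ S := fun h => ((hSmem a).mp h).2 rfl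
  have hxS : x ∉ S := fun h => T.loopless.irrefl x ((hSmem x).mp h).1
  have hScard : S.card + 1 = T.degree x := by
    have h1 : a ∈ T.neighborFinset x := by rwa [mem_neighborFinset]
    have h2 : 0 < (T.neighborFinset x).card := Finset.card_pos.mpr ⟨a, h1⟩
    rw [hSdef, Finset.card_erase_of_mem h1]
    show (T.neighborFinset x).card - 1 + 1 = (T.neighborFinset x).card
    omega
  have hnab : ∀ b, T.Adj x b → b ≠ a → ¬T.Adj a b := fun b hb hba =>
    tree_no_triangle hT.IsAcyclic ha hb (fun h => hba h.symm)
  -- the rewired tree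
  set T' : SimpleGraph V := rewire T x a hax with hT'def
  have hadj : ∀ u v, T'.Adj u v ↔ ((T.Adj u v ∧ u ≠ x ∧ v ≠ x) ∨ (u = x ∧ v = a) ∨
      (u = a ∧ v = x) ∨ (u = a ∧ T.Adj x v ∧ v ≠ a) ∨ (v = a ∧ T.Adj x u ∧ u ≠ a)) :=
    fun u v => Iff.rfl
  letI : DecidableRel T'.Adj := Classical.decRel _
  -- T' is a subgraph of G
  have hle' : T' ≤ G := by
    intro u v h
    rcases (hadj u v).mp h with ⟨h1, _, _⟩ | ⟨rfl, rfl⟩ | ⟨rfl, rfl⟩ | ⟨rfl, h1, h2⟩ | ⟨rfl, h1, h2⟩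
    · exact hle h1
    · exact hle ha
    · exact (hle ha).symm
    · exact hK haK (hNK _ h1) h2.symm
    · exact (hK haK (hNK _ h1) h2.symm).symm
  -- T' is connected
  have hconn' : T'.Connected := by
    have hstep : ∀ w, T.Adj x w → T'.Reachable x w := by
      intro w hw
      by_cases hwa : w = a
      · subst hwa
        exact Adj.reachable ((hadj _ _).mpr (Or.inr (Or.inl ⟨rfl, rfl⟩)))
      · exact (Adj.reachable ((hadj _ _).mpr (Or.inr (Or.inl ⟨rfl, rfl⟩)))).trans
          (Adj.reachable ((hadj _ _).mpr (Or.inr (Or.inr (Or.inr (Or.inl ⟨rfl, hw, hwa⟩))))))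
    refine connected_transfer hT.isConnected ?_
    intro u v huv
    by_cases hux : u = x
    · subst hux; exact hstep v huv
    · by_cases hvx : v = x
      · subst hvx; exact (hstep u huv.symm).symm
      · exact Adj.reachable ((hadj _ _).mpr (Or.inl ⟨huv, hux, hvx⟩))
  -- edge finset of T'
  have hE' : T'.edgeFinset =
      (T.edgeFinset \ S.image (fun b => s(x,b))) ∪ S.image (fun b => s(a,b)) := by
    ext e
    induction e using Sym2.inductionOn with
    | hf u v =>
      simp only [mem_edgeFinset, mem_edgeSet, Finset.mem_union, Finset.mem_sdiff,
        Finset.mem_image]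
      rw [hadj]
      constructor
      · rintro (⟨h1, h2, h3⟩ | ⟨rfl, rfl⟩ | ⟨rfl, rfl⟩ | ⟨rfl, h1, h2⟩ | ⟨rfl, h1, h2⟩)
        · refine Or.inl ⟨h1, ?_⟩
          rintro ⟨b, hb, he⟩
          rw [Sym2.eq_iff] at he
          rcases he with ⟨hxu, rfl⟩ | ⟨hxv, rfl⟩
          · exact h2 hxu.symm
          · exact h3 hxv.symm
        · refine Or.inl ⟨ha, ?_⟩
          rintro ⟨b, hb, he⟩
          exact haS ((Sym2.congr_right.mp he) ▸ hb)
        · refine Or.inl ⟨ha.symm, ?_⟩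
          rintro ⟨b, hb, he⟩
          rw [Sym2.eq_iff] at he
          rcases he with ⟨hxa', rfl⟩ | ⟨_, rfl⟩
          · exact hax hxa'
          · exact haS hb
        · exact Or.inr ⟨v, (hSmem v).mpr ⟨h1, h2⟩, rfl⟩
        · exact Or.inr ⟨u, (hSmem u).mpr ⟨h1, h2⟩, Sym2.eq_swap⟩
      · rintro (⟨h1, h2⟩ | ⟨b, hb, he⟩)
        · by_cases hux : u = x
          · subst hux
            by_cases hva : v = a
            · subst hva; exact Or.inr (Or.inl ⟨rfl, rfl⟩)
            · exact absurd ⟨v, (hSmem v).mpr ⟨h1, hva⟩, rfl⟩ h2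
          · by_cases hvx : v = x
            · subst hvx
              by_cases hua : u = a
              · subst hua; exact Or.inr (Or.inr (Or.inl ⟨rfl, rfl⟩))
              · exact absurd ⟨u, (hSmem u).mpr ⟨h1.symm, hua⟩, Sym2.eq_swap⟩ h2
            · exact Or.inl ⟨h1, hux, hvx⟩
        · rw [Sym2.eq_iff] at he
          obtain ⟨hbS1, hbS2⟩ := (hSmem b).mp hb
          rcases he with ⟨hau, rfl⟩ | ⟨hav, rfl⟩
          · exact Or.inr (Or.inr (Or.inr (Or.inl ⟨hau.symm, hbS1, hbS2⟩)))
          · exact Or.inr (Or.inr (Or.inr (Or.inr ⟨hav.symm, hbS1, hbS2⟩)))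
  -- T' is a tree
  have hDel : S.image (fun b => s(x,b)) ⊆ T.edgeFinset := by
    intro e he
    obtain ⟨b, hb, rfl⟩ := Finset.mem_image.mp he
    rw [mem_edgeFinset, mem_edgeSet]
    exact ((hSmem b).mp hb).1
  have hcarddel : (S.image (fun b => s(x,b))).card = S.card :=
    Finset.card_image_of_injOn (fun b _ b' _ h => Sym2.congr_right.mp h)
  have hcardadd : (S.image (fun b => s(a,b))).card = S.card :=
    Finset.card_image_of_injOn (fun b _ b' _ h => Sym2.congr_right.mp h)
  have hdisjadd : Disjoint (T.edgeFinset \ S.image (fun b => s(x,b))) (S.image (fun b => s(a,b))) := by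
    rw [Finset.disjoint_right]
    intro e he hsd
    obtain ⟨b, hb, rfl⟩ := Finset.mem_image.mp he
    obtain ⟨hbS1, hbS2⟩ := (hSmem b).mp hb
    have := (Finset.mem_sdiff.mp hsd).1
    rw [mem_edgeFinset, mem_edgeSet] at this
    exact hnab b hbS1 hbS2 this
  have hcard' : T'.edgeFinset.card = T.edgeFinset.card := by
    rw [hE', Finset.card_union_of_disjoint hdisjadd, Finset.card_sdiff_of_subset hDel, hcarddel, hcardadd]
    have := Finset.card_le_card hDel
    omega
  have htree' : T'.IsTree := by
    refine isTree_of_connected_card T' hconn' ?_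
    rw [hcard']
    exact hT.card_edgeFinset
  -- degrees
  have hNx' : T'.neighborFinset x = {a} := by
    ext v
    rw [mem_neighborFinset, hadj, Finset.mem_singleton]
    constructor
    · rintro (⟨_, h2, _⟩ | ⟨_, rfl⟩ | ⟨hxa', _⟩ | ⟨hxa', _⟩ | ⟨rfl, hxx, _⟩)
      · exact absurd rfl h2
      · rfl
      · exact absurd hxa' hax
      · exact absurd hxa' hax
      · exact absurd hxx (T.loopless.irrefl x)
    · rintro rfl; exact Or.inr (Or.inl ⟨rfl, rfl⟩)
  have hdx' : T'.degree x = 1 := by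
    show (T'.neighborFinset x).card = 1
    rw [hNx', Finset.card_singleton]
  have hNa' : T'.neighborFinset a = T.neighborFinset a ∪ S := by
    ext v
    rw [mem_neighborFinset, hadj, Finset.mem_union, mem_neighborFinset]
    constructor
    · rintro (⟨h1, _, _⟩ | ⟨hax', _⟩ | ⟨_, rfl⟩ | ⟨_, h1, h2⟩ | ⟨rfl, _, h2⟩)
      · exact Or.inl h1
      · exact absurd hax'.symm hax
      · exact Or.inl ha.symm
      · exact Or.inr ((hSmem v).mpr ⟨h1, h2⟩)
      · exact absurd rfl h2
    · rintro (h1 | h1)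
      · by_cases hvx : v = x
        · subst hvx; exact Or.inr (Or.inr (Or.inl ⟨rfl, rfl⟩))
        · exact Or.inl ⟨h1, fun h => hax h.symm, hvx⟩
      · obtain ⟨h1, h2⟩ := (hSmem v).mp h1
        exact Or.inr (Or.inr (Or.inr (Or.inl ⟨rfl, h1, h2⟩)))
  have hdisjNa : Disjoint (T.neighborFinset a) S := by
    rw [Finset.disjoint_right]
    intro b hb hmem
    obtain ⟨h1, h2⟩ := (hSmem b).mp hb
    rw [mem_neighborFinset] at hmem
    exact hnab b h1 h2 hmem
  have hda' : T'.degree a = T.degree a + S.card := by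
    show (T'.neighborFinset a).card = (T.neighborFinset a).card + S.card
    rw [hNa', Finset.card_union_of_disjoint hdisjNa]
  have hdw' : ∀ w, w ≠ x → w ≠ a → T'.degree w = T.degree w := by
    intro w hwx hwa
    by_cases hxw : T.Adj x w
    · have hNw : T'.neighborFinset w = insert a ((T.neighborFinset w).erase x) := by
        ext v
        rw [mem_neighborFinset, hadj, Finset.mem_insert, Finset.mem_erase, mem_neighborFinset]
        constructor
        · rintro (⟨h1, _, h3⟩ | ⟨hwx', _⟩ | ⟨hwa', _⟩ | ⟨hwa', _⟩ | ⟨rfl, _, _⟩)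
          · exact Or.inr ⟨h3, h1⟩
          · exact absurd hwx' hwx
          · exact absurd hwa' hwa
          · exact absurd hwa' hwa
          · exact Or.inl rfl
        · rintro (rfl | ⟨h1, h2⟩)
          · exact Or.inr (Or.inr (Or.inr (Or.inr ⟨rfl, hxw, hwa⟩)))
          · exact Or.inl ⟨h2, hwx, h1⟩
      have hxin : x ∈ T.neighborFinset w := by rw [mem_neighborFinset]; exact hxw.symm
      have hanotin : a ∉ (T.neighborFinset w).erase x := by
        simp only [Finset.mem_erase, mem_neighborFinset]
        rintro ⟨-, hcontra⟩
        exact hnab w hxw hwa hcontra.symm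
      show (T'.neighborFinset w).card = (T.neighborFinset w).card
      rw [hNw, Finset.card_insert_of_notMem hanotin, Finset.card_erase_of_mem hxin]
      have : 0 < (T.neighborFinset w).card := Finset.card_pos.mpr ⟨x, hxin⟩
      omega
    · have hNw : T'.neighborFinset w = T.neighborFinset w := by
        ext v
        rw [mem_neighborFinset, hadj, mem_neighborFinset]
        constructor
        · rintro (⟨h1, _, _⟩ | ⟨hwx', _⟩ | ⟨hwa', _⟩ | ⟨hwa', _⟩ | ⟨rfl, h1, _⟩)
          · exact h1
          · exact absurd hwx' hwx
          · exact absurd hwa' hwa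
          · exact absurd hwa' hwa
          · exact absurd h1 hxw
        · intro h1
          have hvx : v ≠ x := fun h => hxw ((h ▸ h1).symm)
          exact Or.inl ⟨h1, hwx, hvx⟩
      show (T'.neighborFinset w).card = (T.neighborFinset w).card
      rw [hNw]
  -- s-metric strictly increases
  have hlt : sMetric T < sMetric T' := by
    set F : Sym2 V → ℕ :=
      Sym2.lift ⟨fun u v => T.degree u * T.degree v, fun _ _ => Nat.mul_comm _ _⟩ with hFdef
    set F' : Sym2 V → ℕ :=
      Sym2.lift ⟨fun u v => T'.degree u * T'.degree v, fun _ _ => Nat.mul_comm _ _⟩ with hF'def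
    set ImX := (T.neighborFinset x).image (fun b => s(x,b)) with hImXdef
    set ImA := (T.neighborFinset a).image (fun w => s(a,w)) with hImAdef
    set ImA' := (T'.neighborFinset a).image (fun w => s(a,w)) with hImA'def
    set O := T.edgeFinset \ (ImX ∪ ImA) with hOdef
    set A := ∑ b ∈ S, T.degree b with hAdef
    set B := ∑ w ∈ (T.neighborFinset a).erase x, T.degree w with hBdef
    clear_value A B
    have hxmem : ∀ u v, T.Adj u v → (s(u,v) ∈ ImX ↔ (u = x ∨ v = x)) := by
      intro u v huv
      rw [hImXdef]
      simp only [Finset.mem_image]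
      constructor
      · rintro ⟨b, hb, he⟩
        rw [Sym2.eq_iff] at he
        rcases he with ⟨h1, _⟩ | ⟨h1, _⟩
        · exact Or.inl h1.symm
        · exact Or.inr h1.symm
      · rintro (rfl | rfl)
        · exact ⟨v, by rw [mem_neighborFinset]; exact huv, rfl⟩
        · exact ⟨u, by rw [mem_neighborFinset]; exact huv.symm, Sym2.eq_swap⟩
    have hamem : ∀ u v, T.Adj u v → (s(u,v) ∈ ImA ↔ (u = a ∨ v = a)) := by
      intro u v huv
      rw [hImAdef]
      simp only [Finset.mem_image]
      constructor
      · rintro ⟨b, hb, he⟩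
        rw [Sym2.eq_iff] at he
        rcases he with ⟨h1, _⟩ | ⟨h1, _⟩
        · exact Or.inl h1.symm
        · exact Or.inr h1.symm
      · rintro (rfl | rfl)
        · exact ⟨v, by rw [mem_neighborFinset]; exact huv, rfl⟩
        · exact ⟨u, by rw [mem_neighborFinset]; exact huv.symm, Sym2.eq_swap⟩
    have hamem' : ∀ u v, T'.Adj u v → (s(u,v) ∈ ImA' ↔ (u = a ∨ v = a)) := by
      intro u v huv
      rw [hImA'def]
      simp only [Finset.mem_image]
      constructor
      · rintro ⟨b, hb, he⟩
        rw [Sym2.eq_iff] at he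
        rcases he with ⟨h1, _⟩ | ⟨h1, _⟩
        · exact Or.inl h1.symm
        · exact Or.inr h1.symm
      · rintro (rfl | rfl)
        · exact ⟨v, by rw [mem_neighborFinset]; exact huv, rfl⟩
        · exact ⟨u, by rw [mem_neighborFinset]; exact huv.symm, Sym2.eq_swap⟩
    have hsub1 : ImX ∪ ImA ⊆ T.edgeFinset := by
      intro e he
      rcases Finset.mem_union.mp he with h | h <;>
        obtain ⟨b, hb, rfl⟩ := Finset.mem_image.mp h <;>
        rw [mem_edgeFinset, mem_edgeSet] <;>
        rw [mem_neighborFinset] at hb <;> exact hb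
    have hsub2 : ImA' ⊆ T'.edgeFinset := by
      intro e he
      obtain ⟨b, hb, rfl⟩ := Finset.mem_image.mp he
      rw [mem_edgeFinset, mem_edgeSet]
      rw [mem_neighborFinset] at hb
      exact hb
    have hsplit1 : ∑ e ∈ O, F e + ∑ e ∈ ImX ∪ ImA, F e = sMetric T := by
      rw [sMetric_eq' T]
      exact Finset.sum_sdiff hsub1
    have hinter : ImX ∩ ImA = {s(x,a)} := by
      ext e
      rw [Finset.mem_inter, Finset.mem_singleton]
      constructor
      · rintro ⟨h1, h2⟩
        obtain ⟨b, hb, rfl⟩ := Finset.mem_image.mp h1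
        obtain ⟨w, hw, he2⟩ := Finset.mem_image.mp h2
        rw [Sym2.eq_iff] at he2
        rcases he2 with ⟨h3, h4⟩ | ⟨h3, h4⟩
        · exact absurd h3.symm hax
        · rw [← h3]
      · rintro rfl
        have hmem1 : a ∈ T.neighborFinset x := by rw [mem_neighborFinset]; exact ha
        have hmem2 : x ∈ T.neighborFinset a := by rw [mem_neighborFinset]; exact ha.symm
        have hin1 : s(x,a) ∈ ImX := by
          rw [hImXdef]; exact Finset.mem_image.mpr ⟨a, hmem1, rfl⟩
        have hin2 : s(x,a) ∈ ImA := by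
          rw [hImAdef]; exact Finset.mem_image.mpr ⟨x, hmem2, Sym2.eq_swap⟩
        exact ⟨hin1, hin2⟩
    have hNxeq : T.neighborFinset x = insert a S := by
      rw [hSdef, Finset.insert_erase (by rw [mem_neighborFinset]; exact ha)]
    have hNaeq : T.neighborFinset a = insert x ((T.neighborFinset a).erase x) := by
      rw [Finset.insert_erase (by rw [mem_neighborFinset]; exact ha.symm)]
    have hImXsum : ∑ e ∈ ImX, F e = T.degree x * (T.degree a + A) := by
      have h1 : ∑ e ∈ ImX, F e = ∑ b ∈ T.neighborFinset x, T.degree x * T.degree b := by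
        rw [hImXdef, Finset.sum_image (fun b _ b' _ h => Sym2.congr_right.mp h)]
        simp only [hFdef, Sym2.lift_mk]
      rw [h1, hNxeq, Finset.sum_insert haS, hAdef, mul_add, Finset.mul_sum]
    have hImAsum : ∑ e ∈ ImA, F e = T.degree a * (T.degree x + B) := by
      have h1 : ∑ e ∈ ImA, F e = ∑ w ∈ T.neighborFinset a, T.degree a * T.degree w := by
        rw [hImAdef, Finset.sum_image (fun b _ b' _ h => Sym2.congr_right.mp h)]
        simp only [hFdef, Sym2.lift_mk]
      rw [h1, hNaeq, Finset.sum_insert (Finset.notMem_erase x _), hBdef, mul_add, Finset.mul_sum]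
    have hxaF : F s(x,a) = T.degree x * T.degree a := rfl
    have hunion : ∑ e ∈ ImX ∪ ImA, F e + F s(x,a) = ∑ e ∈ ImX, F e + ∑ e ∈ ImA, F e := by
      have h := Finset.sum_union_inter (s₁ := ImX) (s₂ := ImA) (f := F)
      rw [hinter, Finset.sum_singleton] at h
      exact h
    have hOO : T'.edgeFinset \ ImA' = O := by
      ext e
      induction e using Sym2.inductionOn with
      | hf u v =>
        rw [Finset.mem_sdiff, hOdef, Finset.mem_sdiff, Finset.mem_union, mem_edgeFinset,
          mem_edgeSet, mem_edgeFinset, mem_edgeSet]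
        constructor
        · rintro ⟨h1, h2⟩
          have hne : u ≠ a ∧ v ≠ a :=
            ⟨fun hc => h2 ((hamem' u v h1).mpr (Or.inl hc)),
             fun hc => h2 ((hamem' u v h1).mpr (Or.inr hc))⟩
          rcases (hadj u v).mp h1 with ⟨h3, h4, h5⟩ | ⟨rfl, rfl⟩ | ⟨rfl, rfl⟩ | ⟨rfl, _, _⟩ | ⟨rfl, _, _⟩
          · refine ⟨h3, ?_⟩
            rintro (hmem | hmem)
            · rcases (hxmem u v h3).mp hmem with rfl | rfl
              · exact h4 rfl
              · exact h5 rfl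
            · rcases (hamem u v h3).mp hmem with rfl | rfl
              · exact hne.1 rfl
              · exact hne.2 rfl
          · exact absurd rfl hne.2
          · exact absurd rfl hne.1
          · exact absurd rfl hne.1
          · exact absurd rfl hne.2
        · rintro ⟨h1, h2⟩
          have hux : u ≠ x := fun hc => h2 (Or.inl ((hxmem u v h1).mpr (Or.inl hc)))
          have hvx : v ≠ x := fun hc => h2 (Or.inl ((hxmem u v h1).mpr (Or.inr hc)))
          have hua : u ≠ a := fun hc => h2 (Or.inr ((hamem u v h1).mpr (Or.inl hc)))
          have hva : v ≠ a := fun hc => h2 (Or.inr ((hamem u v h1).mpr (Or.inr hc)))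
          have h1' : T'.Adj u v := (hadj u v).mpr (Or.inl ⟨h1, hux, hvx⟩)
          refine ⟨h1', ?_⟩
          intro hmem
          rcases (hamem' u v h1').mp hmem with rfl | rfl
          · exact hua rfl
          · exact hva rfl
    have hFOO : ∀ e ∈ O, F' e = F e := by
      intro e he
      induction e using Sym2.inductionOn with
      | hf u v =>
        rw [hOdef, Finset.mem_sdiff, Finset.mem_union, mem_edgeFinset, mem_edgeSet] at he
        obtain ⟨h1, h2⟩ := he
        have hux : u ≠ x := fun hc => h2 (Or.inl ((hxmem u v h1).mpr (Or.inl hc)))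
        have hvx : v ≠ x := fun hc => h2 (Or.inl ((hxmem u v h1).mpr (Or.inr hc)))
        have hua : u ≠ a := fun hc => h2 (Or.inr ((hamem u v h1).mpr (Or.inl hc)))
        have hva : v ≠ a := fun hc => h2 (Or.inr ((hamem u v h1).mpr (Or.inr hc)))
        show T'.degree u * T'.degree v = T.degree u * T.degree v
        rw [hdw' u hux hua, hdw' v hvx hva]
    have hsplit2 : sMetric T' = ∑ e ∈ O, F e + ∑ e ∈ ImA', F' e := by
      rw [sMetric_eq' T', ← Finset.sum_sdiff hsub2, hOO, Finset.sum_congr rfl hFOO]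
    have hImA'sum : ∑ e ∈ ImA', F' e = (T.degree a + S.card) * (1 + B + A) := by
      have h1 : ∑ e ∈ ImA', F' e = ∑ w ∈ T'.neighborFinset a, T'.degree a * T'.degree w := by
        rw [hImA'def, Finset.sum_image (fun b _ b' _ h => Sym2.congr_right.mp h)]
        simp only [hF'def, Sym2.lift_mk]
      have h2 : ∑ w ∈ T'.neighborFinset a, T'.degree a * T'.degree w
          = ∑ w ∈ T.neighborFinset a, T'.degree a * T'.degree w
            + ∑ b ∈ S, T'.degree a * T'.degree b := by
        rw [hNa', Finset.sum_union hdisjNa]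
      have h3 : ∑ b ∈ S, T'.degree a * T'.degree b = T'.degree a * A := by
        rw [hAdef, Finset.mul_sum]
        refine Finset.sum_congr rfl ?_
        intro b hb
        obtain ⟨hb1, hb2⟩ := (hSmem b).mp hb
        rw [hdw' b (fun hc => T.loopless.irrefl x (hc ▸ hb1)) hb2]
      have h4 : ∑ w ∈ T.neighborFinset a, T'.degree a * T'.degree w
          = T'.degree a * (1 + B) := by
        rw [hNaeq, Finset.sum_insert (Finset.notMem_erase x _), hdx']
        have h5 : ∑ w ∈ (T.neighborFinset a).erase x, T'.degree a * T'.degree w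
            = ∑ w ∈ (T.neighborFinset a).erase x, T'.degree a * T.degree w := by
          refine Finset.sum_congr rfl ?_
          intro w hw
          obtain ⟨hwx, hwmem⟩ := Finset.mem_erase.mp hw
          rw [mem_neighborFinset] at hwmem
          rw [hdw' w hwx hwmem.ne']
        rw [h5, mul_add, mul_one, hBdef, Finset.mul_sum]
      rw [h1, h2, h3, h4, hda']
      ring
    have hA_ge : S.card ≤ A := by
      rw [hAdef]
      calc S.card = ∑ _b ∈ S, 1 := by rw [Finset.sum_const, smul_eq_mul, mul_one]
        _ ≤ _ := Finset.sum_le_sum (fun b hb => by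
            obtain ⟨h1, _⟩ := (hSmem b).mp hb
            exact (T.degree_pos_iff_exists_adj b).mpr ⟨x, h1.symm⟩)
    have hB_ge : T.degree a ≤ B + 1 := by
      have h1 : ((T.neighborFinset a).erase x).card + 1 = T.degree a := by
        rw [Finset.card_erase_of_mem (by rw [mem_neighborFinset]; exact ha.symm)]
        have : 0 < (T.neighborFinset a).card :=
          Finset.card_pos.mpr ⟨x, by rw [mem_neighborFinset]; exact ha.symm⟩
        show (T.neighborFinset a).card - 1 + 1 = (T.neighborFinset a).card
        omega
      have h2 : ((T.neighborFinset a).erase x).card ≤ B := by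
        rw [hBdef]
        calc ((T.neighborFinset a).erase x).card = ∑ _b ∈ (T.neighborFinset a).erase x, 1 := by
              rw [Finset.sum_const, smul_eq_mul, mul_one]
          _ ≤ _ := Finset.sum_le_sum (fun w hw => by
              have hwa := Finset.mem_erase.mp hw
              rw [mem_neighborFinset] at hwa
              exact (T.degree_pos_iff_exists_adj w).mpr ⟨a, hwa.2.symm⟩)
      omega
    have key : T.degree x * (T.degree a + A) + T.degree a * (T.degree x + B)
        < (T.degree a + S.card) * (1 + B + A) + T.degree x * T.degree a := by
      obtain ⟨cc, hcc⟩ : ∃ cc, S.card = cc + 1 := ⟨S.card - 1, by omega⟩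
      obtain ⟨dd, hdd⟩ : ∃ dd, T.degree a = dd + 2 := ⟨T.degree a - 2, by omega⟩
      obtain ⟨aa, haa⟩ : ∃ aa, A = cc + 1 + aa := ⟨A - S.card, by omega⟩
      obtain ⟨bb, hbb⟩ : ∃ bb, B = dd + 1 + bb := ⟨B - (T.degree a - 1), by omega⟩
      have hmx : T.degree x = cc + 2 := by omega
      rw [hmx, hdd, haa, hbb, hcc]
      have hexpand : (dd + 2 + (cc + 1)) * (1 + (dd + 1 + bb) + (cc + 1 + aa))
            + (cc + 2) * (dd + 2)
          = ((cc + 2) * (dd + 2 + (cc + 1 + aa)) + (dd + 2) * (cc + 2 + (dd + 1 + bb)))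
            + ((dd + 1) * aa + (cc + 1) * (dd + 1 + bb)) := by ring
      rw [hexpand]
      have hpos : 0 < (dd + 1) * aa + (cc + 1) * (dd + 1 + bb) := by positivity
      exact Nat.lt_add_of_pos_right hpos
    have e1 : sMetric T + T.degree x * T.degree a
        = ∑ e ∈ O, F e + (T.degree x * (T.degree a + A) + T.degree a * (T.degree x + B)) := by
      calc sMetric T + T.degree x * T.degree a
          = (∑ e ∈ O, F e + ∑ e ∈ ImX ∪ ImA, F e) + F s(x,a) := by rw [hsplit1, hxaF]
        _ = ∑ e ∈ O, F e + (∑ e ∈ ImX ∪ ImA, F e + F s(x,a)) := by rw [Nat.add_assoc]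
        _ = ∑ e ∈ O, F e + (∑ e ∈ ImX, F e + ∑ e ∈ ImA, F e) := by rw [hunion]
        _ = _ := by rw [hImXsum, hImAsum]
    have e2 : sMetric T' = ∑ e ∈ O, F e + (T.degree a + S.card) * (1 + B + A) := by
      rw [hsplit2, hImA'sum]
    have final : sMetric T + T.degree x * T.degree a
        < sMetric T' + T.degree x * T.degree a := by
      rw [e1, e2, Nat.add_assoc]
      exact Nat.add_lt_add_left key _
    exact Nat.lt_of_add_lt_add_right final
  have hle2 := le_tau2' G hle' htree'
  exact absurd (hopt ▸ lt_of_lt_of_le hlt hle2) (lt_irrefl _)
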